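/- Let F : ℝ → ℝ be twice differentiable with second derivative everywhere nonnegative (so F is convex), and let D_F(x, y) = F(x) - F(y) - (x - y) * (deriv F y). Then for any x ∈ ℝ and any a ≤ b, the infimum over y ∈ [a, b] of D_F(x, y) equals D_F(x, b) if x > b, equals D_F(x, a) if x < a, and equals 0 if a ≤ x ≤ b. -/

import Mathlib

/-- The Bregman divergence generated by a differentiable function `F : ℝ → ℝ`. -/
noncomputable def bregman (F : ℝ → ℝ) (x y : ℝ) : ℝ :=
  F x - F y - (x - y) * deriv F y

theorem sInf_bregman_eq_clipped (F : ℝ → ℝ)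
    (hF : Differentiable ℝ F) (hF' : Differentiable ℝ (deriv F))
    (hF'' : ∀ y, 0 ≤ deriv (deriv F) y)
    (x a b : ℝ) (hab : a ≤ b) :
    sInf ((fun y => bregman F x y) '' Set.Icc a b) =
      if b < x then bregman F x b
      else if x < a then bregman F x a
      else 0 := by
  set g : ℝ → ℝ := fun y => bregman F x y with hg
  have hderiv : ∀ y, HasDerivAt g (-((x - y) * deriv (deriv F) y)) y := by
    intro y
    have h1 : HasDerivAt F (deriv F y) y := (hF y).hasDerivAt
    have h2 : HasDerivAt (deriv F) (deriv (deriv F) y) y := (hF' y).hasDerivAt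
    have h3 : HasDerivAt (fun y => (x - y) * deriv F y)
        ((-1) * deriv F y + (x - y) * deriv (deriv F) y) y :=
      (((hasDerivAt_id y).const_sub x).mul h2)
    have h4 := ((hasDerivAt_const y (F x)).sub h1).sub h3
    convert h4 using 1
    · rfl
    · rfl
    · rfl
    · ring
  have hdiff : Differentiable ℝ g := fun y => (hderiv y).differentiableAt
  have hgderiv : ∀ y, deriv g y = -((x - y) * deriv (deriv F) y) :=
    fun y => (hderiv y).deriv
  have hanti : AntitoneOn g (Set.Iic x) := by
    apply antitoneOn_of_deriv_nonpos (convex_Iic x) hdiff.continuous.continuousOn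
      hdiff.differentiableOn
    intro y hy
    rw [interior_Iic] at hy
    rw [hgderiv]
    have hxy : 0 ≤ x - y := by have := hy.out; linarith
    nlinarith [hF'' y]
  have hmono : MonotoneOn g (Set.Ici x) := by
    apply monotoneOn_of_deriv_nonneg (convex_Ici x) hdiff.continuous.continuousOn
      hdiff.differentiableOn
    intro y hy
    rw [interior_Ici] at hy
    rw [hgderiv]
    have hxy : x - y ≤ 0 := by have := hy.out; linarith
    nlinarith [hF'' y]
  have hx0 : g x = 0 := by simp [hg, bregman]
  have key : ∀ c, c ∈ Set.Icc a b → (∀ y ∈ Set.Icc a b, g c ≤ g y) →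
      sInf (g '' Set.Icc a b) = g c := by
    intro c hc hmin
    apply IsLeast.csInf_eq
    exact ⟨⟨c, hc, rfl⟩, by rintro _ ⟨y, hy, rfl⟩; exact hmin y hy⟩
  rcases lt_or_ge b x with h1 | h1
  · rw [if_pos h1]
    exact key b ⟨hab, le_refl b⟩ (fun y hy =>
      hanti (le_of_lt (lt_of_le_of_lt hy.2 h1)) h1.le hy.2)
  · rw [if_neg (not_lt.mpr h1)]
    rcases lt_or_ge x a with h2 | h2
    · rw [if_pos h2]
      exact key a ⟨le_refl a, hab⟩ (fun y hy => hmono h2.le (h2.le.trans hy.1) hy.1)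
    · rw [if_neg (not_lt.mpr h2)]
      rw [← hx0]
      apply key x ⟨h2, h1⟩
      intro y hy
      rcases le_total y x with h3 | h3
      · exact hanti h3 (le_refl x) h3
      · exact hmono (le_refl x) h3 h3
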